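/- Fix a real κ ≥ 1 and reals λ̂₁ ≥ λ̂₂ ≥ ⋯ ≥ λ̂_p ≥ 0 (p a positive integer) with λ̂_p = 0. Then the function f(μ) := Σ_{i=1}^p g_{λ̂ᵢ}(μ) is strictly convex on (0, ∞) and continuously differentiable on (0, ∞). -/

import Mathlib

open Set Filter Topology


/-- `gfun κ λ̂ μ = (min (max μ λ̂) (κμ) − λ̂)²`. -/
noncomputable def gfun (κ lamh μ : ℝ) : ℝ := (min (max μ lamh) (κ * μ) - lamh) ^ 2

/-- `ffun κ p λ̂ μ = ∑_{i=1}^p gfun κ λ̂ᵢ μ` (1-based indexing of `λ̂`). -/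
noncomputable def ffun (κ : ℝ) (p : ℕ) (lamhat : ℕ → ℝ) (μ : ℝ) : ℝ :=
  ∑ i ∈ Finset.Icc 1 p, gfun κ (lamhat i) μ

/-- convexity of `x ↦ max (c*x+d) 0 ^ 2` -/
lemma convexOn_part (c d : ℝ) : ConvexOn ℝ (univ : Set ℝ) (fun x => max (c*x + d) 0 ^ 2) := by
  refine ⟨convex_univ, fun x _ y _ a b ha hb hab => ?_⟩
  simp only [smul_eq_mul]
  set u := max (c*x + d) 0 with hu
  set v := max (c*y + d) 0 with hv
  have hu0 : 0 ≤ u := le_max_right _ _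
  have hv0 : 0 ≤ v := le_max_right _ _
  have hux : c*x + d ≤ u := le_max_left _ _
  have hvy : c*y + d ≤ v := le_max_left _ _
  have hdd : c*(a*x+b*y) + d = a*(c*x+d) + b*(c*y+d) := by
    have h' : a*(c*x+d) + b*(c*y+d) = c*(a*x+b*y) + (a+b)*d := by ring
    rw [h', hab, one_mul]
  have h1 : max (c*(a*x+b*y) + d) 0 ≤ a*u + b*v := by
    refine max_le ?_ (by positivity)
    rw [hdd]
    have := mul_le_mul_of_nonneg_left hux ha
    have := mul_le_mul_of_nonneg_left hvy hb
    linarith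
  have h0 : (0:ℝ) ≤ max (c*(a*x+b*y) + d) 0 := le_max_right _ _
  nlinarith [sq_nonneg (u - v), mul_nonneg ha hb, sq_nonneg (a*u+b*v)]

lemma hasDerivAt_part (c d x : ℝ) :
    HasDerivAt (fun y => max (c*y + d) 0 ^ 2) (2*c*max (c*x + d) 0) x := by
  rcases lt_trichotomy (c*x + d) 0 with h | h | h
  · have hc : Continuous fun y : ℝ => c*y + d := by continuity
    have hev : ∀ᶠ y in 𝓝 x, c*y + d ∈ Iio 0 :=
      hc.continuousAt.eventually_mem (isOpen_Iio.mem_nhds h)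
    rw [max_eq_right h.le, mul_zero]
    refine HasDerivAt.congr_of_eventuallyEq (hasDerivAt_const x 0) ?_
    filter_upwards [hev] with y hy
    rw [max_eq_right (le_of_lt hy)]; norm_num
  · rw [h, max_self, mul_zero]
    rw [hasDerivAt_iff_isLittleO]
    rw [Asymptotics.isLittleO_iff]
    intro ε hε
    rw [Metric.eventually_nhds_iff]
    refine ⟨ε / (c^2 + 1), by positivity, fun y hy => ?_⟩
    rw [Real.dist_eq] at hy
    have h1 : max (c*y + d) 0 ≤ |c| * |y - x| := by
      refine max_le ?_ (by positivity)
      have : c*y + d = c*(y-x) := by linarith [h]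
      rw [this]
      calc c*(y-x) ≤ |c*(y-x)| := le_abs_self _
        _ = |c| * |y-x| := abs_mul _ _
    have h0 : (0:ℝ) ≤ max (c*y + d) 0 := le_max_right _ _
    have habs : |y - x| * (c^2+1) ≤ ε := by
      rw [← le_div_iff₀ (by positivity)]
      exact hy.le
    have hgx : max (c*x+d) 0 ^ 2 = 0 := by rw [h]; simp
    rw [hgx]
    simp only [smul_zero, sub_zero, Real.norm_eq_abs]
    rw [abs_of_nonneg (by positivity)]
    have hy0 : (0:ℝ) ≤ |y - x| := abs_nonneg _
    nlinarith [mul_self_le_mul_self h0 h1, sq_abs c,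
      mul_le_mul_of_nonneg_left habs (abs_nonneg (y-x)), sq_nonneg (|y-x|)]
  · have hev : ∀ᶠ y in 𝓝 x, 0 < c*y + d :=
      (Continuous.continuousAt (by continuity)).eventually_mem (isOpen_Ioi.mem_nhds h)
    rw [max_eq_left h.le]
    have : HasDerivAt (fun y => (c*y + d) ^ 2) (2*c*(c*x+d)) x := by
      have h1 : HasDerivAt (fun y : ℝ => c*y + d) c x := by
        simpa using ((hasDerivAt_id x).const_mul c).add_const d
      simpa [mul_comm, mul_assoc, mul_left_comm] using (h1.fun_pow 2)
    refine this.congr_of_eventuallyEq ?_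
    filter_upwards [hev] with y hy
    rw [max_eq_left (le_of_lt hy)]

/-- the smooth global extension of `gfun` -/
noncomputable def Gf (κ a x : ℝ) : ℝ := max (1*x + -a) 0 ^ 2 + max ((-κ)*x + a) 0 ^ 2

noncomputable def Gf' (κ a x : ℝ) : ℝ := 2*1*max (1*x + -a) 0 + 2*(-κ)*max ((-κ)*x + a) 0

lemma hasDerivAt_Gf (κ a x : ℝ) : HasDerivAt (Gf κ a) (Gf' κ a x) x :=
  (hasDerivAt_part 1 (-a) x).add (hasDerivAt_part (-κ) a x)

lemma continuous_Gf' (κ a : ℝ) : Continuous (Gf' κ a) := by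
  unfold Gf'
  fun_prop

lemma convexOn_Gf (κ a : ℝ) : ConvexOn ℝ (univ : Set ℝ) (Gf κ a) :=
  (convexOn_part 1 (-a)).add (convexOn_part (-κ) a)

lemma gfun_eq_Gf {κ a : ℝ} (hκ : 1 ≤ κ) (ha : 0 ≤ a) {μ : ℝ} (hμ : 0 < μ) :
    gfun κ a μ = Gf κ a μ := by
  unfold gfun Gf
  have hκμ : μ ≤ κ*μ := by nlinarith
  rcases le_total μ a with h | h
  · rw [max_eq_right h]
    rcases le_total (κ*μ) a with h2 | h2
    · rw [min_eq_right h2, max_eq_right (by linarith : 1*μ + -a ≤ 0),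
        max_eq_left (by linarith : (0:ℝ) ≤ -κ*μ + a)]
      ring
    · rw [min_eq_left h2, max_eq_right (by linarith : 1*μ + -a ≤ 0),
        max_eq_right (by linarith : -κ*μ + a ≤ 0)]
      ring_nf
  · rw [max_eq_left h, min_eq_left hκμ,
      max_eq_left (by linarith : (0:ℝ) ≤ 1*μ + -a),
      max_eq_right (by nlinarith : -κ*μ + a ≤ 0)]
    ring

lemma convexOn_finset_sum {s : Set ℝ} (hs : Convex ℝ s) {ι : Type*} (t : Finset ι)
    (f : ι → ℝ → ℝ) (hf : ∀ i ∈ t, ConvexOn ℝ s (f i)) :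
    ConvexOn ℝ s (fun x => ∑ i ∈ t, f i x) := by
  classical
  induction t using Finset.induction with
  | empty => simpa using convexOn_const 0 hs
  | insert j t' hni ih =>
    simp only [Finset.sum_insert hni]
    exact (hf j (Finset.mem_insert_self j t')).add
      (ih fun i hi => hf i (Finset.mem_insert_of_mem hi))

lemma strictConvexOn_congr {s : Set ℝ} {f g : ℝ → ℝ} (h : StrictConvexOn ℝ s f)
    (he : Set.EqOn f g s) : StrictConvexOn ℝ s g := by
  refine ⟨h.1, fun x hx y hy hxy a b ha hb hab => ?_⟩
  rw [← he hx, ← he hy, ← he (h.1 hx hy ha.le hb.le hab)]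
  exact h.2 hx hy hxy ha hb hab


theorem stmt8 (κ : ℝ) (hκ : 1 ≤ κ) (p : ℕ) (hp : 0 < p) (lamhat : ℕ → ℝ)
    -- λ̂₁ ≥ λ̂₂ ≥ ⋯ ≥ λ̂_p ≥ 0:
    (hanti : ∀ i j : ℕ, 1 ≤ i → i ≤ j → j ≤ p → lamhat j ≤ lamhat i)
    (hnonneg : ∀ i : ℕ, 1 ≤ i → i ≤ p → 0 ≤ lamhat i)
    -- λ̂_p = 0:
    (hlast : lamhat p = 0) :
    StrictConvexOn ℝ (Set.Ioi (0 : ℝ)) (ffun κ p lamhat) ∧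
    (∀ μ : ℝ, 0 < μ → DifferentiableAt ℝ (ffun κ p lamhat) μ) ∧
    ContinuousOn (deriv (ffun κ p lamhat)) (Set.Ioi (0 : ℝ)) := by
  have hEq : EqOn (ffun κ p lamhat)
      (fun μ => ∑ i ∈ Finset.Icc 1 p, Gf κ (lamhat i) μ) (Ioi 0) := by
    intro μ hμ
    refine Finset.sum_congr rfl fun i hi => ?_
    rw [Finset.mem_Icc] at hi
    exact gfun_eq_Gf hκ (hnonneg i hi.1 hi.2) hμ
  have hF : ∀ x : ℝ, HasDerivAt (fun μ => ∑ i ∈ Finset.Icc 1 p, Gf κ (lamhat i) μ)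
      (∑ i ∈ Finset.Icc 1 p, Gf' κ (lamhat i) x) x :=
    fun x => HasDerivAt.fun_sum fun i _ => hasDerivAt_Gf κ (lamhat i) x
  have hder : ∀ μ : ℝ, 0 < μ → HasDerivAt (ffun κ p lamhat)
      (∑ i ∈ Finset.Icc 1 p, Gf' κ (lamhat i) μ) μ := by
    intro μ hμ
    refine (hF μ).congr_of_eventuallyEq ?_
    exact hEq.eventuallyEq_of_mem (isOpen_Ioi.mem_nhds hμ)
  refine ⟨?_, fun μ hμ => (hder μ hμ).differentiableAt, ?_⟩
  · obtain ⟨q, rfl⟩ : ∃ q, p = q + 1 := ⟨p - 1, (Nat.succ_pred_eq_of_pos hp).symm⟩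
    have hEq2 : EqOn (ffun κ (q+1) lamhat)
        (fun μ => (∑ i ∈ Finset.Icc 1 q, Gf κ (lamhat i) μ) + μ ^ 2) (Ioi 0) := by
      intro μ hμ
      have hμ' : (0:ℝ) < μ := hμ
      show (∑ i ∈ Finset.Icc 1 (q+1), gfun κ (lamhat i) μ) = _
      rw [Finset.sum_Icc_succ_top (Nat.le_add_left 1 q)]
      congr 1
      · refine Finset.sum_congr rfl fun i hi => ?_
        rw [Finset.mem_Icc] at hi
        exact gfun_eq_Gf hκ (hnonneg i hi.1 (hi.2.trans (Nat.le_succ q))) hμ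
      · show (min (max μ (lamhat (q+1))) (κ * μ) - lamhat (q+1)) ^ 2 = μ ^ 2
        rw [hlast, max_eq_left hμ'.le, min_eq_left (by nlinarith : μ ≤ κ*μ)]
        ring
    refine strictConvexOn_congr ?_ hEq2.symm
    exact (convexOn_finset_sum (convex_Ioi 0) _ _
        (fun i _ => (convexOn_Gf κ (lamhat i)).subset (subset_univ _) (convex_Ioi 0))).add_strictConvexOn
      ((Even.strictConvexOn_pow even_two two_ne_zero).subset (subset_univ _) (convex_Ioi 0))
  · have hcont : ContinuousOn (fun μ => ∑ i ∈ Finset.Icc 1 p, Gf' κ (lamhat i) μ) (Ioi 0) :=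
      (continuous_finset_sum _ fun i _ => continuous_Gf' κ (lamhat i)).continuousOn
    exact hcont.congr fun μ hμ => (hder μ hμ).deriv
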